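/- arXiv:1605.05354 — 4 statements merged into one kernel-verified Lean document; each statement's English description precedes it below -/
import Mathlib

section
/- Let X be a subshift such that there exist constants C, r > 0 with |L_n(X)| ≤ C·n^r·e^{n·h(X)} for every n, and let μ be an ergodic measure of maximal entropy on X. Then for every word w ∈ L(X) with μ([w]) > 0, there exists ε > 0 such that the number of words of length n in L(X) ending with w is greater than ε·n^{-1/2}·e^{n·h(X)} for all n ≥ |w|. -/
open Real Filter MeasureTheory

/-- The left shift map on bi-infinite sequences. -/
def shiftMap {A : Type*} (x : ℤ → A) : ℤ → A := fun i => x (i + 1)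

/-- The word of length `n` read from `x` starting at position `i`. -/
def wordAt {A : Type*} (x : ℤ → A) (i : ℤ) (n : ℕ) : List A :=
  List.ofFn (fun k : Fin n => x (i + (k : ℕ)))

/-- A word `w` belongs to the language of a set `S` of bi-infinite sequences if it
occurs somewhere in some point of `S`. -/
def InLangS {A : Type*} (S : Set (ℤ → A)) (w : List A) : Prop :=
  ∃ x ∈ S, ∃ i : ℤ, wordAt x i w.length = w

/-- Hamming distance between two words of the same length: the number of
positions at which they differ. -/
def listHamming {A : Type*} [DecidableEq A] (v w : List A) : ℕ :=
  (List.zipWith (fun a b => if a = b then 0 else 1) v w).sum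

/-- A subshift: a closed, shift-invariant set of bi-infinite sequences over a
finite (discrete) alphabet. -/
structure Subshift (A : Type*) [TopologicalSpace A] where
  carrier : Set (ℤ → A)
  isClosed : IsClosed carrier
  invariant : ∀ x ∈ carrier, shiftMap x ∈ carrier

/-- Topological entropy of (the language of) `S`, as the infimum of
`(1/n) log |L_n(S)|` (equal to the limit by subadditivity). -/
noncomputable def langEntropy {A : Type*} (S : Set (ℤ → A)) : ℝ :=
  ⨅ n : ℕ+, Real.log ({w : List A | w.length = (n : ℕ) ∧ InLangS S w}.ncard) / (n : ℝ)

/-- The cylinder set of points agreeing with `w : Fin n → A` on coordinates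
`0, …, n-1`. -/
def cylF {A : Type*} (n : ℕ) (w : Fin n → A) : Set (ℤ → A) :=
  {x : ℤ → A | ∀ i : Fin n, x ((i : ℕ) : ℤ) = w i}

/-- The cylinder set `[w]` of points beginning (at coordinate 0) with the word `w`. -/
def cylList {A : Type*} (w : List A) : Set (ℤ → A) :=
  {x : ℤ → A | wordAt x 0 w.length = w}

/-- The `n`-th partition entropy `H_n(μ) = -∑_{w ∈ A^n} μ[w] log μ[w]`. -/
noncomputable def partEntropy {A : Type*} [Fintype A] [MeasurableSpace A]
    (μ : MeasureTheory.Measure (ℤ → A)) (n : ℕ) : ℝ :=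
  ∑ w : Fin n → A, Real.negMulLog ((μ (cylF n w)).toReal)

/-- Measure-theoretic entropy of a shift-invariant measure, as
`inf_n H_n(μ)/n` (equal to the limit by subadditivity). -/
noncomputable def measEntropy {A : Type*} [Fintype A] [MeasurableSpace A]
    (μ : MeasureTheory.Measure (ℤ → A)) : ℝ :=
  ⨅ n : ℕ+, partEntropy μ (n : ℕ) / (n : ℝ)

section Aux1
variable {A : Type*}

lemma length_wordAt (x : ℤ → A) (i : ℤ) (n : ℕ) : (wordAt x i n).length = n := by
  simp [wordAt]

lemma wordAt_append (x : ℤ → A) (i : ℤ) (a b : ℕ) :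
    wordAt x i (a + b) = wordAt x i a ++ wordAt x (i + a) b := by
  apply List.ext_getElem (by simp [wordAt])
  intro t h1 h2
  simp only [wordAt, List.length_ofFn] at h1 h2 ⊢
  rw [List.getElem_append]
  simp only [List.getElem_ofFn, List.length_ofFn]
  split_ifs with ht
  · rfl
  · congr 1; push_cast; omega

lemma wordAt_take (x : ℤ → A) (i : ℤ) {a n : ℕ} (h : a ≤ n) :
    (wordAt x i n).take a = wordAt x i a := by
  rw [show n = a + (n - a) by omega, wordAt_append]
  exact List.take_left' (length_wordAt x i a)

lemma wordAt_drop (x : ℤ → A) (i : ℤ) {a n : ℕ} (h : a ≤ n) :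
    (wordAt x i n).drop a = wordAt x (i + a) (n - a) := by
  have h1 : (wordAt x i a ++ wordAt x (i + a) (n - a)).drop a = wordAt x (i + a) (n - a) :=
    List.drop_left' (length_wordAt x i a)
  rw [show wordAt x i n = wordAt x i a ++ wordAt x (i + a) (n - a) by
    rw [← wordAt_append]; congr 1; omega]
  exact h1

lemma isSuffix_eq_drop {a c : List A} (h : a <:+ c) :
    c.drop (c.length - a.length) = a := by
  obtain ⟨p, rfl⟩ := h
  simp only [List.length_append]
  rw [show p.length + a.length - a.length = p.length by omega]
  exact List.drop_left

lemma shiftMap_iterate (x : ℤ → A) (p : ℕ) (j : ℤ) : (shiftMap^[p] x) j = x (j + p) := by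
  induction p generalizing x j with
  | zero => simp
  | succ p ih =>
    rw [Function.iterate_succ_apply, ih (shiftMap x) j]
    show x (j + p + 1) = _
    congr 1
    push_cast
    ring

lemma wordAt_ofFn_eq (x : ℤ → A) {n : ℕ} (v : Fin n → A) :
    wordAt x 0 n = List.ofFn v ↔ ∀ t : Fin n, x ((t : ℕ) : ℤ) = v t := by
  unfold wordAt
  rw [List.ofFn_inj]
  constructor
  · intro h t; have := congrFun h t; simpa using this
  · intro h; funext t; simpa using h t

lemma wordAt_word_eq (x : ℤ → A) (i : ℤ) (u : List A) :
    wordAt x i u.length = u ↔ ∀ t : Fin u.length, x (i + (t : ℕ)) = u.get t := by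
  unfold wordAt
  constructor
  · intro h t
    have h2 : (List.ofFn fun k : Fin u.length => x (i + (k : ℕ)))[(t:ℕ)]'(by simpa using t.isLt) = u[(t:ℕ)]'(t.isLt) := by
      simp only [h]
    simpa using h2
  · intro h
    apply List.ext_getElem (by simp)
    intro t h1 h2
    simpa using h ⟨t, h2⟩

end Aux1
section Aux2

lemma negMulLog_le_one {x : ℝ} (hx : 0 ≤ x) : Real.negMulLog x ≤ 1 := by
  rcases eq_or_lt_of_le hx with h | h
  · simp [← h]
  · have h1 : Real.log x⁻¹ ≤ x⁻¹ - 1 := Real.log_le_sub_one_of_pos (by positivity)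
    have h2 : Real.negMulLog x = x * Real.log x⁻¹ := by
      simp [Real.negMulLog, Real.log_inv]
    rw [h2]
    calc x * Real.log x⁻¹ ≤ x * (x⁻¹ - 1) := mul_le_mul_of_nonneg_left h1 hx
      _ = 1 - x := by field_simp
      _ ≤ 1 := by linarith

lemma negMulLog_nonneg' {x : ℝ} (h0 : 0 ≤ x) (h1 : x ≤ 1) : 0 ≤ Real.negMulLog x := by
  have hl := Real.log_nonpos h0 h1
  have h2 : 0 ≤ -Real.log x := by linarith
  have := mul_nonneg h0 h2
  simpa [Real.negMulLog, mul_comm] using this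

lemma sum_negMulLog_le {ι : Type*} (t : Finset ι) (f : ι → ℝ) (hpos : ∀ i ∈ t, 0 < f i) :
    ∑ i ∈ t, Real.negMulLog (f i) ≤
      (∑ i ∈ t, f i) * Real.log t.card + Real.negMulLog (∑ i ∈ t, f i) := by
  rcases t.eq_empty_or_nonempty with rfl | hne
  · simp [Real.negMulLog_zero]
  set m := ∑ i ∈ t, f i with hm
  have hmpos : 0 < m := Finset.sum_pos hpos hne
  set c : ℝ := (t.card : ℝ) with hc
  have hcpos : (0:ℝ) < c := by rw [hc]; exact_mod_cast hne.card_pos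
  have e1 : ∀ i ∈ t, Real.negMulLog (f i)
      = f i * Real.log (m / (c * f i)) + f i * Real.log c - f i * Real.log m := by
    intro i hi
    have hfi := hpos i hi
    rw [Real.log_div (ne_of_gt hmpos) (by positivity), Real.log_mul (ne_of_gt hcpos) (ne_of_gt hfi)]
    simp [Real.negMulLog]
    ring
  have hbound : ∀ i ∈ t, f i * Real.log (m / (c * f i)) ≤ m / c - f i := by
    intro i hi
    have hfi := hpos i hi
    have h1 : Real.log (m / (c * f i)) ≤ m / (c * f i) - 1 :=
      Real.log_le_sub_one_of_pos (by positivity)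
    calc f i * Real.log (m / (c * f i)) ≤ f i * (m / (c * f i) - 1) :=
          mul_le_mul_of_nonneg_left h1 (le_of_lt hfi)
      _ = m / c - f i := by field_simp
  calc ∑ i ∈ t, Real.negMulLog (f i)
      = ∑ i ∈ t, (f i * Real.log (m / (c * f i)) + f i * Real.log c - f i * Real.log m) :=
        Finset.sum_congr rfl e1
    _ = (∑ i ∈ t, f i * Real.log (m / (c * f i))) + m * Real.log c - m * Real.log m := by
        rw [Finset.sum_sub_distrib, Finset.sum_add_distrib, ← Finset.sum_mul, ← Finset.sum_mul]
    _ ≤ (∑ i ∈ t, (m / c - f i)) + m * Real.log c - m * Real.log m := by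
        have := Finset.sum_le_sum hbound
        linarith
    _ = m * Real.log c + Real.negMulLog m := by
        rw [Finset.sum_sub_distrib, Finset.sum_const, nsmul_eq_mul]
        rw [show (t.card : ℝ) * (m / c) = m by rw [hc]; field_simp]
        simp [Real.negMulLog]
        ring

end Aux2
section Aux3
variable {A : Type*} [Fintype A] [DecidableEq A] [TopologicalSpace A]
  [MeasurableSpace A] [MeasurableSingletonClass A]

lemma measurableSet_wordSet (i : ℤ) (u : List A) :
    MeasurableSet {x : ℤ → A | wordAt x i u.length = u} := by
  have he : {x : ℤ → A | wordAt x i u.length = u}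
      = ⋂ t : Fin u.length, (fun x : ℤ → A => x (i + (t : ℕ))) ⁻¹' {u.get t} := by
    ext x
    simp only [Set.mem_setOf_eq, Set.mem_iInter, Set.mem_preimage, Set.mem_singleton_iff]
    exact wordAt_word_eq x i u
  rw [he]
  exact MeasurableSet.iInter fun t => (measurable_pi_apply _) (measurableSet_singleton _)

lemma measurableSet_cylF (n : ℕ) (v : Fin n → A) : MeasurableSet (cylF n v) := by
  have he : cylF n v = ⋂ t : Fin n, (fun x : ℤ → A => x ((t : ℕ) : ℤ)) ⁻¹' {v t} := by
    ext x; simp [cylF]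
  rw [he]
  exact MeasurableSet.iInter fun t => (measurable_pi_apply _) (measurableSet_singleton _)

lemma cylF_disjoint {n : ℕ} {v₁ v₂ : Fin n → A} (h : v₁ ≠ v₂) :
    Disjoint (cylF n v₁) (cylF n v₂) := by
  rw [Set.disjoint_left]
  intro x h1 h2
  exact h (funext fun t => (h1 t).symm.trans (h2 t))

lemma iUnion_cylF (n : ℕ) : ⋃ v : Fin n → A, cylF n v = Set.univ := by
  ext x
  simp only [Set.mem_iUnion, Set.mem_univ, iff_true]
  exact ⟨fun t => x ((t : ℕ) : ℤ), fun t => rfl⟩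

lemma mem_cylF_iff_wordAt {n : ℕ} {v : Fin n → A} {x : ℤ → A} :
    x ∈ cylF n v ↔ wordAt x 0 n = List.ofFn v := by
  rw [wordAt_ofFn_eq]; rfl

lemma wordAt_mem_lang (X : Subshift A) {x : ℤ → A} (hx : x ∈ X.carrier) (i : ℤ) (n : ℕ) :
    InLangS X.carrier (wordAt x i n) :=
  ⟨x, hx, i, by rw [length_wordAt]⟩

lemma exists_ext (X : Subshift A) {u : List A} (hu : InLangS X.carrier u) {n : ℕ}
    (hn : u.length ≤ n) : ∃ v : List A, v.length = n ∧ InLangS X.carrier v ∧ u <:+ v := by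
  obtain ⟨x, hx, i, hxi⟩ := hu
  set c : ℤ := ((n - u.length : ℕ) : ℤ) with hcdef
  have e := wordAt_append x (i - c) (n - u.length) u.length
  rw [show (n - u.length) + u.length = n by omega] at e
  rw [show i - c + ((n - u.length : ℕ) : ℤ) = i by rw [← hcdef]; ring] at e
  rw [hxi] at e
  exact ⟨wordAt x (i - c) n, length_wordAt .., wordAt_mem_lang X hx _ _, ⟨_, e.symm⟩⟩

lemma finite_listLen (n : ℕ) : {l : List A | l.length = n}.Finite := by
  apply Set.Finite.subset (Set.finite_range (List.ofFn : (Fin n → A) → List A))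
  intro l hl
  refine ⟨fun t => l.get (Fin.cast hl.symm t), ?_⟩
  apply List.ext_getElem (by simpa using hl.symm)
  intro t h1 h2
  simp [List.getElem_ofFn]

lemma occS_preimage_iterate (u : List A) (p q : ℕ) :
    (shiftMap^[p]) ⁻¹' {x : ℤ → A | wordAt x ((q : ℕ) : ℤ) u.length = u}
      = {x : ℤ → A | wordAt x (((q + p : ℕ)) : ℤ) u.length = u} := by
  ext x
  simp only [Set.mem_preimage, Set.mem_setOf_eq]
  have he : wordAt (shiftMap^[p] x) (q : ℤ) u.length = wordAt x (((q + p : ℕ)) : ℤ) u.length := by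
    unfold wordAt
    apply congrArg List.ofFn
    funext t
    rw [shiftMap_iterate]
    congr 1
    push_cast
    ring
  rw [he]

lemma measurableSet_carrier' [DiscreteTopology A] (X : Subshift A) :
    MeasurableSet X.carrier := by
  letI : BorelSpace A := by
    refine ⟨?_⟩
    rw [borel_eq_top_of_discrete]
    exact eq_top_iff.mpr fun s _ => (Set.to_countable s).measurableSet
  exact X.isClosed.measurableSet

end Aux3
section Aux4
open scoped ENNReal
variable {A : Type*} [Fintype A] [DecidableEq A] [TopologicalSpace A]
  [MeasurableSpace A] [MeasurableSingletonClass A]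

/-- The event that `w` occurs starting at position `q`. -/
def occSet (w : List A) (q : ℕ) : Set (ℤ → A) := {x : ℤ → A | wordAt x (q : ℤ) w.length = w}

lemma measurableSet_occSet (w : List A) (q : ℕ) : MeasurableSet (occSet w q) :=
  measurableSet_wordSet _ _

lemma preimage_iterate_occSet (w : List A) (p q : ℕ) :
    (shiftMap^[p]) ⁻¹' occSet w q = occSet w (q + p) :=
  occS_preimage_iterate w p q

lemma occSet_zero (w : List A) : occSet w 0 = cylList w := by
  unfold occSet cylList
  norm_num

/-- No occurrence of `w` starting in `[0, Q)`. -/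
def SqSet (w : List A) (Q : ℕ) : Set (ℤ → A) := ⋂ (q : ℕ) (_ : q < Q), (occSet w q)ᶜ

lemma measurableSet_SqSet (w : List A) (Q : ℕ) : MeasurableSet (SqSet w Q) :=
  MeasurableSet.iInter fun q => MeasurableSet.iInter fun _ => (measurableSet_occSet w q).compl

lemma antitone_SqSet (w : List A) : Antitone (SqSet w) := by
  intro a b hab
  exact Set.iInter₂_mono' fun q hq => ⟨q, lt_of_lt_of_le hq hab, subset_rfl⟩

lemma exists_window (μ : MeasureTheory.Measure (ℤ → A)) [IsProbabilityMeasure μ]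
    (herg : Ergodic shiftMap μ) (w : List A) (hpos : 0 < μ (cylList w)) {β : ℝ} (hβ : 0 < β) :
    ∃ W : ℕ, 1 ≤ W ∧ μ (SqSet w W) < ENNReal.ofReal β := by
  set B : Set (ℤ → A) := ⋂ q : ℕ, (occSet w q)ᶜ with hB
  have hBmeas : MeasurableSet B :=
    MeasurableSet.iInter fun q => (measurableSet_occSet w q).compl
  have hBsub : B ⊆ shiftMap ⁻¹' B := by
    intro x hx
    simp only [hB, Set.mem_iInter, Set.mem_preimage] at hx ⊢
    intro q hmem
    have h1 : x ∈ (shiftMap^[1]) ⁻¹' occSet w q := by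
      simpa [Function.iterate_one] using hmem
    rw [preimage_iterate_occSet] at h1
    exact hx (q + 1) h1
  have hB0 : μ B = 0 := by
    rcases herg.ae_empty_or_univ_of_ae_le_preimage hBmeas.nullMeasurableSet
        hBsub.eventuallyLE with h | h
    · rw [measure_congr h, measure_empty]
    · exfalso
      have hB1 : μ B = 1 := by rw [measure_congr h, measure_univ]
      have hsub0 : B ⊆ (occSet w 0)ᶜ := fun x hx => by
        simp only [hB, Set.mem_iInter] at hx; exact hx 0
      have h2 : (1 : ℝ≥0∞) ≤ μ ((occSet w 0)ᶜ) := hB1 ▸ measure_mono hsub0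
      have h3 := measure_add_measure_compl (μ := μ) (measurableSet_occSet w 0)
      have h4 : μ (occSet w 0) + 1 ≤ 0 + 1 := by
        rw [zero_add]
        calc μ (occSet w 0) + 1 ≤ μ (occSet w 0) + μ ((occSet w 0)ᶜ) := by
              exact add_le_add (le_refl _) h2
          _ = 1 := by rw [h3, measure_univ]
      have h5 : μ (occSet w 0) ≤ 0 := by
        rwa [ENNReal.add_le_add_iff_right (by norm_num)] at h4
      rw [occSet_zero] at h5
      exact absurd (le_antisymm h5 zero_le).symm (ne_of_gt hpos).symm
  have hiInter : ⋂ Q : ℕ, SqSet w Q = B := by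
    ext x
    simp only [hB, SqSet, Set.mem_iInter]
    constructor
    · intro h q
      exact h (q + 1) q (Nat.lt_succ_self q)
    · intro h Q q _
      exact h q
  have hts := tendsto_measure_iInter_atTop (μ := μ)
    (fun Q => (measurableSet_SqSet w Q).nullMeasurableSet) (antitone_SqSet w)
    ⟨0, measure_ne_top μ _⟩
  rw [hiInter, hB0] at hts
  have hev : ∀ᶠ Q in atTop, μ (SqSet w Q) < ENNReal.ofReal β :=
    hts.eventually_lt_const (by simpa using ENNReal.ofReal_pos.mpr hβ)
  obtain ⟨W₀, hW₀⟩ := hev.exists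
  exact ⟨max W₀ 1, le_max_right _ _,
    lt_of_le_of_lt (measure_mono (antitone_SqSet w (le_max_left W₀ 1))) hW₀⟩

lemma sum_cylF_toReal (μ : MeasureTheory.Measure (ℤ → A)) [IsProbabilityMeasure μ] (n : ℕ) :
    ∑ v : Fin n → A, (μ (cylF n v)).toReal = 1 := by
  have h1 : μ (⋃ v : Fin n → A, cylF n v) = ∑' v : Fin n → A, μ (cylF n v) :=
    measure_iUnion (fun v₁ v₂ h => cylF_disjoint h) (fun v => measurableSet_cylF n v)
  rw [iUnion_cylF, measure_univ, tsum_fintype] at h1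
  have h2 := ENNReal.toReal_sum (s := Finset.univ)
    (f := fun v : Fin n → A => μ (cylF n v)) (fun v _ => measure_ne_top μ _)
  rw [← h1] at h2
  simpa using h2.symm

end Aux4
section Aux5
open scoped ENNReal
variable {A : Type*} [Fintype A] [DecidableEq A] [TopologicalSpace A]
  [MeasurableSpace A] [MeasurableSingletonClass A]

lemma posmeas_word_in_lang (X : Subshift A) (μ : MeasureTheory.Measure (ℤ → A))
    (hXc : μ X.carrierᶜ = 0) {n : ℕ} {v : Fin n → A} (hv : 0 < (μ (cylF n v)).toReal) :
    ∃ x ∈ X.carrier, wordAt x 0 n = List.ofFn v := by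
  have h0 : μ (cylF n v) ≠ 0 := by
    intro h
    rw [h] at hv
    simp at hv
  have hne : (cylF n v ∩ X.carrier).Nonempty := by
    apply nonempty_of_measure_ne_zero (μ := μ)
    rw [measure_inter_conull hXc]
    exact h0
  obtain ⟨x, hxc, hxX⟩ := hne
  exact ⟨x, hxX, mem_cylF_iff_wordAt.mp hxc⟩

lemma card_posmeas_le_lang (X : Subshift A) (μ : MeasureTheory.Measure (ℤ → A))
    (hXc : μ X.carrierᶜ = 0) (n : ℕ) (Q : Finset (Fin n → A))
    (hQ : ∀ v ∈ Q, 0 < (μ (cylF n v)).toReal) :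
    (Q.card : ℝ) ≤ (({v : List A | v.length = n ∧ InLangS X.carrier v}.ncard : ℕ) : ℝ) := by
  have hfin : {v : List A | v.length = n ∧ InLangS X.carrier v}.Finite :=
    (finite_listLen n).subset fun l hl => hl.1
  have hmaps : ∀ v ∈ Q, List.ofFn v ∈ hfin.toFinset := by
    intro v hv
    obtain ⟨x, hxX, hword⟩ := posmeas_word_in_lang X μ hXc (hQ v hv)
    rw [Set.Finite.mem_toFinset]
    exact ⟨by simp, by rw [← hword]; exact wordAt_mem_lang X hxX 0 n⟩
  have hcard : Q.card ≤ hfin.toFinset.card :=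
    Finset.card_le_card_of_injOn _ hmaps (List.ofFn_injective.injOn)
  rw [Set.ncard_eq_toFinset_card _ hfin]
  exact_mod_cast hcard

lemma fat_bound (X : Subshift A) (C r : ℝ) (hC : 0 < C) (hr : 0 < r)
    (μ : MeasureTheory.Measure (ℤ → A)) [IsProbabilityMeasure μ] (hXc : μ X.carrierᶜ = 0)
    (n : ℕ) (hn1 : 1 ≤ n)
    (hcountn : (({v : List A | v.length = n ∧ InLangS X.carrier v}.ncard : ℕ) : ℝ) ≤
        C * (n : ℝ) ^ r * Real.exp ((n : ℝ) * langEntropy X.carrier))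
    (hlang1 : (1:ℝ) ≤ (({v : List A | v.length = n ∧ InLangS X.carrier v}.ncard : ℕ) : ℝ))
    (hHn : (n : ℝ) * langEntropy X.carrier ≤ partEntropy μ n)
    (hlogn : 4 * |Real.log C| + 9 ≤ Real.log n) :
    ∑ v ∈ Finset.univ.filter
        (fun v : Fin n → A =>
          (n:ℝ) ^ ((1:ℝ)/2) * Real.exp (-((n:ℝ) * langEntropy X.carrier))
            < (μ (cylF n v)).toReal),
      (μ (cylF n v)).toReal ≤ 1 - 1/(4*r+2) := by
  classical
  set hX := langEntropy X.carrier with hhX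
  set s : ℝ := (n:ℝ) ^ ((1:ℝ)/2) * Real.exp (-((n:ℝ) * hX)) with hs
  set mv : (Fin n → A) → ℝ := fun v => (μ (cylF n v)).toReal with hmv
  have hn0 : (0:ℝ) < n := by exact_mod_cast hn1
  have hspos : 0 < s := by rw [hs]; positivity
  have hmv0 : ∀ v, 0 ≤ mv v := fun v => ENNReal.toReal_nonneg
  have hsum1 : ∑ v, mv v = 1 := sum_cylF_toReal μ n
  set F : Finset (Fin n → A) := Finset.univ.filter (fun v => s < mv v) with hF
  set m : ℝ := ∑ v ∈ F, mv v with hmdef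
  set δ : ℝ := 1/(4*r+2) with hδ
  have hδpos : 0 < δ := by rw [hδ]; positivity
  have hδhalf : δ ≤ 1/2 := by
    rw [hδ, div_le_div_iff₀ (by positivity) (by norm_num)]
    nlinarith
  show m ≤ 1 - δ
  have hm0 : 0 ≤ m := Finset.sum_nonneg fun v _ => hmv0 v
  have hmle : ∀ (Q : Finset (Fin n → A)), ∑ v ∈ Q, mv v ≤ 1 := by
    intro Q
    rw [← hsum1]
    exact Finset.sum_le_sum_of_subset_of_nonneg (Finset.subset_univ Q) (fun v _ _ => hmv0 v)
  by_cases hFne : F.Nonempty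
  swap
  · rw [Finset.not_nonempty_iff_eq_empty] at hFne
    rw [hmdef, hFne, Finset.sum_empty]; linarith
  set L : ℝ := Real.log n with hhL
  set D : ℝ := |Real.log C| with hhD
  have hD0 : 0 ≤ D := abs_nonneg _
  have hL9 : (9:ℝ) ≤ L := by rw [hhL]; linarith
  have hQn0 : (0:ℝ) ≤ Real.log C + r * L + n * hX := by
    have h1 : (1:ℝ) ≤ Real.exp (Real.log C + r * L + n * hX) := by
      rw [Real.exp_add, Real.exp_add, Real.exp_log hC]
      rw [show Real.exp (r * L) = (n:ℝ) ^ r by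
        rw [Real.rpow_def_of_pos hn0, hhL, mul_comm]]
      exact le_trans hlang1 hcountn
    calc (0:ℝ) = Real.log 1 := Real.log_one.symm
      _ ≤ Real.log (Real.exp (Real.log C + r * L + n * hX)) :=
          Real.log_le_log one_pos h1
      _ = _ := Real.log_exp _
  have hFpos : ∀ v ∈ F, 0 < mv v := fun v hv =>
    lt_trans hspos (Finset.mem_filter.mp hv).2
  have hFcard : (F.card : ℝ) * s ≤ 1 := by
    have h1 : (F.card : ℝ) * s ≤ ∑ v ∈ F, mv v := by
      have h2 := Finset.card_nsmul_le_sum F mv s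
        (fun v hv => le_of_lt (Finset.mem_filter.mp hv).2)
      simpa [nsmul_eq_mul] using h2
    exact le_trans h1 (hmle F)
  have hlogF : Real.log (F.card) ≤ n * hX - L/2 := by
    have hcard1 : (1:ℝ) ≤ (F.card:ℝ) := by exact_mod_cast hFne.card_pos
    have h2 : (F.card : ℝ) ≤ 1/s := by rw [le_div_iff₀ hspos]; exact hFcard
    calc Real.log (F.card) ≤ Real.log (1/s) := Real.log_le_log (by linarith) h2
      _ = -(Real.log s) := by rw [one_div, Real.log_inv]
      _ = n * hX - L/2 := by
          rw [hs, Real.log_mul (by positivity) (Real.exp_ne_zero _),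
            Real.log_rpow hn0, Real.log_exp, hhL]
          ring
  have hb1 : ∑ v ∈ F, Real.negMulLog (mv v) ≤ m * (n * hX - L/2) + 1 := by
    have h1 := sum_negMulLog_le F mv hFpos
    have h3 : m * Real.log F.card ≤ m * (n * hX - L/2) :=
      mul_le_mul_of_nonneg_left hlogF hm0
    have h4 : Real.negMulLog m ≤ 1 := negMulLog_le_one hm0
    rw [← hmdef] at h1
    linarith
  set G2 : Finset (Fin n → A) := Finset.univ.filter (fun v => ¬ s < mv v) with hG2
  set G2p : Finset (Fin n → A) := G2.filter (fun v => 0 < mv v) with hG2p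
  have hsplit : partEntropy μ n
      = (∑ v ∈ F, Real.negMulLog (mv v)) + ∑ v ∈ G2, Real.negMulLog (mv v) := by
    rw [partEntropy, hF, hG2]
    exact (Finset.sum_filter_add_sum_filter_not Finset.univ _ _).symm
  have hzeroeq : ∀ v ∈ G2, v ∉ G2p → mv v = 0 := by
    intro v hv hnv
    rcases eq_or_lt_of_le (hmv0 v) with h | h
    · exact h.symm
    · exact absurd (Finset.mem_filter.mpr ⟨hv, h⟩) hnv
  have hzero : ∑ v ∈ G2, Real.negMulLog (mv v) = ∑ v ∈ G2p, Real.negMulLog (mv v) := by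
    refine (Finset.sum_subset (Finset.filter_subset _ _) ?_).symm
    intro v hv hnv
    rw [hzeroeq v hv hnv, Real.negMulLog_zero]
  have hsumG2 : ∑ v ∈ G2, mv v = 1 - m := by
    have h1 := Finset.sum_filter_add_sum_filter_not Finset.univ (fun v => s < mv v) mv
    rw [hsum1] at h1
    rw [hG2]
    rw [← hF] at h1
    linarith [h1]
  have hsumG2p : ∑ v ∈ G2p, mv v = 1 - m := by
    rw [← hsumG2]
    refine (Finset.sum_subset (Finset.filter_subset _ _) ?_)
    intro v hv hnv
    exact hzeroeq v hv hnv
  have h1m0 : 0 ≤ 1 - m := by have := hmle F; rw [← hmdef] at this; linarith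
  have hG2ppos : ∀ v ∈ G2p, 0 < mv v := fun v hv => (Finset.mem_filter.mp hv).2
  have hlogG2p : Real.log (G2p.card) ≤ Real.log C + r*L + n*hX := by
    rcases Nat.eq_zero_or_pos G2p.card with h | h
    · rw [h]; simpa using hQn0
    · have hc := card_posmeas_le_lang X μ hXc n G2p hG2ppos
      calc Real.log G2p.card ≤ Real.log (C * (n:ℝ)^r * Real.exp (n * hX)) := by
            apply Real.log_le_log (by exact_mod_cast h) (le_trans hc hcountn)
        _ = Real.log C + r * L + n * hX := by
            rw [Real.log_mul (by positivity) (Real.exp_ne_zero _),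
              Real.log_mul (ne_of_gt hC) (by positivity), Real.log_exp,
              Real.log_rpow hn0, hhL]
  have hb2 : ∑ v ∈ G2p, Real.negMulLog (mv v) ≤ (1-m) * (Real.log C + r*L + n*hX) + 1 := by
    have h1 := sum_negMulLog_le G2p mv hG2ppos
    rw [hsumG2p] at h1
    have h3 : (1-m) * Real.log G2p.card ≤ (1-m) * (Real.log C + r*L + n*hX) :=
      mul_le_mul_of_nonneg_left hlogG2p h1m0
    have h4 : Real.negMulLog (1-m) ≤ 1 := negMulLog_le_one h1m0
    linarith
  have hmain : (n:ℝ) * hX ≤ m * (n*hX - L/2) + (1-m)*(Real.log C + r*L + n*hX) + 2 := by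
    have h1 := hHn
    rw [hsplit, hzero] at h1
    linarith
  have hkey : 0 ≤ -(m * (L/2)) + (1-m)*(Real.log C + r*L) + 2 := by
    have expand : m * (n*hX - L/2) + (1-m)*(Real.log C + r*L + n*hX) + 2
        = n*hX + (-(m*(L/2)) + (1-m)*(Real.log C + r*L) + 2) := by ring
    rw [expand] at hmain
    linarith
  by_contra hcon
  push_neg at hcon
  have hδr : δ*(r+1/2) = 1/4 := by
    rw [hδ]
    field_simp
    ring
  have e2 : (1-δ)*(L/2) ≤ m*(L/2) :=
    mul_le_mul_of_nonneg_right (by linarith) (by linarith)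
  have e2' : (1-δ)*(L/2) = L/2 - δ*(L/2) := by ring
  have hlogCD : Real.log C ≤ D := by rw [hhD]; exact le_abs_self _
  have hδD : δ * D ≤ D := by
    calc δ * D ≤ 1 * D := mul_le_mul_of_nonneg_right (by linarith) hD0
      _ = D := one_mul D
  rcases le_or_gt 0 (Real.log C + r*L) with hsgn | hsgn
  · have h5 : (1-m)*(Real.log C + r*L) ≤ δ*(Real.log C + r*L) :=
      mul_le_mul_of_nonneg_right (by linarith) hsgn
    have h6 : δ*(Real.log C + r*L) ≤ δ*(D + r*L) :=
      mul_le_mul_of_nonneg_left (by linarith) (le_of_lt hδpos)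
    have h6' : δ*(D + r*L) = δ*D + δ*(r*L) := by ring
    have e1 : δ*(r*L) + δ*(L/2) = L*(δ*(r+1/2)) := by ring
    rw [hδr] at e1
    linarith
  · have h5 : (1-m)*(Real.log C + r*L) ≤ 0 :=
      mul_nonpos_of_nonneg_of_nonpos h1m0 (le_of_lt hsgn)
    have h7 : 1/2 ≤ m := by linarith
    have e3 : (1/2)*(L/2) ≤ m*(L/2) := mul_le_mul_of_nonneg_right h7 (by linarith)
    have e3' : ((1:ℝ)/2)*(L/2) = L/4 := by ring
    linarith
end Aux5
section Aux6
open scoped ENNReal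
variable {A : Type*} [Fintype A] [DecidableEq A] [TopologicalSpace A]
  [MeasurableSpace A] [MeasurableSingletonClass A]

lemma measEntropy_le_partEntropy (μ : MeasureTheory.Measure (ℤ → A))
    [IsProbabilityMeasure μ] (n : ℕ) (hn : 1 ≤ n) :
    (n : ℝ) * measEntropy μ ≤ partEntropy μ n := by
  have hpart0 : ∀ m : ℕ+, 0 ≤ partEntropy μ (m : ℕ) := by
    intro m
    apply Finset.sum_nonneg
    intro v _
    apply negMulLog_nonneg' ENNReal.toReal_nonneg
    calc (μ (cylF (m:ℕ) v)).toReal ≤ (1 : ℝ≥0∞).toReal :=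
          ENNReal.toReal_mono (by norm_num) prob_le_one
      _ = 1 := by simp
  have hb : BddBelow (Set.range fun m : ℕ+ => partEntropy μ (m : ℕ) / (m : ℝ)) := by
    refine ⟨0, ?_⟩
    rintro y ⟨m, rfl⟩
    have := hpart0 m
    positivity
  have h1 : measEntropy μ ≤ partEntropy μ n / n := ciInf_le hb (⟨n, hn⟩ : ℕ+)
  have hn0 : (0:ℝ) < n := by exact_mod_cast hn
  calc (n : ℝ) * measEntropy μ ≤ (n : ℝ) * (partEntropy μ n / n) :=
        mul_le_mul_of_nonneg_left h1 (le_of_lt hn0)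
    _ = partEntropy μ n := by field_simp

lemma main_est [Nonempty A] (X : Subshift A) (C r : ℝ) (hC : 0 < C) (hr : 0 < r)
    (μ : MeasureTheory.Measure (ℤ → A)) [IsProbabilityMeasure μ]
    (hmp : MeasurePreserving shiftMap μ μ)
    (hXc : μ X.carrierᶜ = 0) (w : List A) (W : ℕ) (hW1 : 1 ≤ W)
    (hWμ : μ (SqSet w W) < ENNReal.ofReal (1/(12*r+6)))
    (n : ℕ) (hn1 : 1 ≤ n) (hnW : W + w.length + 1 ≤ n)
    (hcountn : (({v : List A | v.length = n ∧ InLangS X.carrier v}.ncard : ℕ) : ℝ) ≤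
        C * (n : ℝ) ^ r * Real.exp ((n : ℝ) * langEntropy X.carrier))
    (hlang1 : (1:ℝ) ≤ (({v : List A | v.length = n ∧ InLangS X.carrier v}.ncard : ℕ) : ℝ))
    (hHn : (n : ℝ) * langEntropy X.carrier ≤ partEntropy μ n)
    (hlogn : 4 * |Real.log C| + 9 ≤ Real.log n) :
    2*(1/(12*r+6)) ≤
      (({v : List A | v.length = n ∧ InLangS X.carrier v ∧ w <:+ v}.ncard : ℕ) : ℝ)
        * (Fintype.card (Fin (W+1) × (Fin W → A)) : ℝ)
        * ((n:ℝ) ^ ((1:ℝ)/2) * Real.exp (-((n:ℝ) * langEntropy X.carrier))) := by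
  classical
  set β : ℝ := 1/(12*r+6) with hβ
  set δ : ℝ := 1/(4*r+2) with hδ
  have hβpos : 0 < β := by rw [hβ]; positivity
  have hδpos : 0 < δ := by rw [hδ]; positivity
  have hβδ : δ = 3 * β := by rw [hβ, hδ]; field_simp; ring
  set k : ℕ := w.length with hk
  set a : ℕ := n - (k + W) with ha
  have ha1 : 1 ≤ a := by omega
  have haeq : a + k + W = n := by omega
  set hX : ℝ := langEntropy X.carrier with hhX
  set s : ℝ := (n:ℝ) ^ ((1:ℝ)/2) * Real.exp (-((n:ℝ) * hX)) with hs
  have hn0 : (0:ℝ) < n := by exact_mod_cast hn1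
  have hspos : 0 < s := by rw [hs]; positivity
  set mv : (Fin n → A) → ℝ := fun v => (μ (cylF n v)).toReal with hmv
  have hmv0 : ∀ v, 0 ≤ mv v := fun v => ENNReal.toReal_nonneg
  -- the fat bound
  have hfat := fat_bound X C r hC hr μ hXc n hn1 hcountn hlang1 hHn hlogn
  set F : Finset (Fin n → A) := Finset.univ.filter (fun v => s < mv v) with hF
  -- hfat : ∑ v ∈ F, mv v ≤ 1 - δ
  -- the window event
  set An : Set (ℤ → A) := ⋃ q ∈ Finset.range W, occSet w (a + q) with hAn
  have hAnmeas : MeasurableSet An :=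
    MeasurableSet.biUnion (Finset.range W).countable_toSet
      (fun q _ => measurableSet_occSet w _)
  have hAnc : μ Anᶜ < ENNReal.ofReal β := by
    have hmm : ∀ (x : ℤ → A) (q : ℕ), (shiftMap^[a] x ∈ occSet w q) ↔ x ∈ occSet w (a + q) := by
      intro x q
      rw [← Set.mem_preimage, preimage_iterate_occSet w a q, show q + a = a + q by omega]
    have hpre : (shiftMap^[a]) ⁻¹' (SqSet w W) = Anᶜ := by
      rw [hAn, SqSet, Set.compl_iUnion₂]
      ext x
      simp only [Set.mem_iInter, Set.mem_preimage, Set.mem_compl_iff, Finset.mem_range]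
      constructor
      · intro h q hq hmem
        exact h q hq ((hmm x q).mpr hmem)
      · intro h q hq hmem
        exact h q hq ((hmm x q).mp hmem)
    rw [← hpre, (hmp.iterate a).measure_preimage (measurableSet_SqSet w W).nullMeasurableSet]
    exact hWμ
  -- the fat union
  set FatU : Set (ℤ → A) := ⋃ v ∈ F, cylF n v with hFatU
  have hFatmeas : MeasurableSet FatU :=
    MeasurableSet.biUnion F.countable_toSet (fun v _ => measurableSet_cylF n v)
  have hFatm : (μ FatU).toReal = ∑ v ∈ F, mv v := by
    rw [hFatU, measure_biUnion_finset (fun v₁ h1 v₂ h2 h12 => cylF_disjoint h12)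
      (fun v _ => measurableSet_cylF n v)]
    exact ENNReal.toReal_sum (fun v _ => measure_ne_top μ _)
  -- the good set
  set S : Set (ℤ → A) := An ∩ FatUᶜ with hS
  have hSmeas : MeasurableSet S := hAnmeas.inter hFatmeas.compl
  have hSlb : 2*β ≤ (μ S).toReal := by
    have hcompl : Sᶜ = Anᶜ ∪ FatU := by rw [hS, Set.compl_inter, compl_compl]
    have h1 : μ Sᶜ ≤ μ Anᶜ + μ FatU := by
      rw [hcompl]; exact measure_union_le _ _
    have h2 : (μ Sᶜ).toReal ≤ (μ Anᶜ).toReal + (μ FatU).toReal := by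
      calc (μ Sᶜ).toReal ≤ (μ Anᶜ + μ FatU).toReal :=
            ENNReal.toReal_mono (ENNReal.add_ne_top.mpr ⟨measure_ne_top μ _, measure_ne_top μ _⟩) h1
        _ = (μ Anᶜ).toReal + (μ FatU).toReal :=
            ENNReal.toReal_add (measure_ne_top μ _) (measure_ne_top μ _)
    have h3 : (μ Anᶜ).toReal ≤ β := by
      calc (μ Anᶜ).toReal ≤ (ENNReal.ofReal β).toReal :=
            ENNReal.toReal_mono ENNReal.ofReal_ne_top (le_of_lt hAnc)
        _ = β := ENNReal.toReal_ofReal (le_of_lt hβpos)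
    have h4 : (μ FatU).toReal ≤ 1 - δ := by rw [hFatm]; exact hfat
    have h5 : (μ S).toReal + (μ Sᶜ).toReal = 1 := by
      have h6 := measure_add_measure_compl (μ := μ) hSmeas
      have h7 : ((μ S) + (μ Sᶜ)).toReal = (1 : ℝ≥0∞).toReal := by rw [h6]; simp
      rw [ENNReal.toReal_add (measure_ne_top μ _) (measure_ne_top μ _)] at h7
      simpa using h7
    linarith
  -- good words
  set G : Finset (Fin n → A) := Finset.univ.filter
    (fun v => (∃ q, q < W ∧ ((List.ofFn v).drop (a + q)).take k = w) ∧ mv v ≤ s) with hG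
  have hSsub : S ⊆ ⋃ v ∈ G, cylF n v := by
    intro x hx
    obtain ⟨hxA, hxF⟩ := hx
    set vx : Fin n → A := fun t => x ((t:ℕ):ℤ) with hvx
    have hxcyl : x ∈ cylF n vx := fun t => rfl
    have hword : wordAt x 0 n = List.ofFn vx := mem_cylF_iff_wordAt.mp hxcyl
    have hocc : ∃ q, q < W ∧ ((List.ofFn vx).drop (a + q)).take k = w := by
      rw [hAn] at hxA
      obtain ⟨q, hq⟩ := Set.mem_iUnion.mp hxA
      obtain ⟨hqW, hq2⟩ := Set.mem_iUnion.mp hq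
      have hqW' : q < W := Finset.mem_range.mp hqW
      refine ⟨q, hqW', ?_⟩
      rw [← hword, wordAt_drop x 0 (by omega : a + q ≤ n),
        wordAt_take x _ (by omega : k ≤ n - (a + q))]
      simpa [occSet] using hq2
    have hnf : mv vx ≤ s := by
      by_contra hlt
      push_neg at hlt
      exact hxF (Set.mem_iUnion₂.mpr
        ⟨vx, Finset.mem_filter.mpr ⟨Finset.mem_univ _, hlt⟩, hxcyl⟩)
    exact Set.mem_iUnion₂.mpr
      ⟨vx, Finset.mem_filter.mpr ⟨Finset.mem_univ _, hocc, hnf⟩, hxcyl⟩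
  have hGsum : 2*β ≤ ∑ v ∈ G, mv v := by
    have h1 : μ S ≤ ∑ v ∈ G, μ (cylF n v) :=
      le_trans (measure_mono hSsub) (measure_biUnion_finset_le G _)
    have h2 : (μ S).toReal ≤ ∑ v ∈ G, mv v := by
      calc (μ S).toReal ≤ (∑ v ∈ G, μ (cylF n v)).toReal :=
            ENNReal.toReal_mono (ENNReal.sum_lt_top.mpr fun v _ => measure_lt_top μ _).ne h1
        _ = ∑ v ∈ G, mv v := ENNReal.toReal_sum (fun v _ => measure_ne_top μ _)
    linarith
  set Gp : Finset (Fin n → A) := G.filter (fun v => 0 < mv v) with hGp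
  have hGpsum : ∑ v ∈ G, mv v = ∑ v ∈ Gp, mv v := by
    refine (Finset.sum_subset (Finset.filter_subset _ _) ?_).symm
    intro v hv hnv
    rcases eq_or_lt_of_le (hmv0 v) with h | h
    · exact h.symm
    · exact absurd (Finset.mem_filter.mpr ⟨hv, h⟩) hnv
  have hGpcard_s : 2*β ≤ (Gp.card : ℝ) * s := by
    have h1 : ∑ v ∈ Gp, mv v ≤ Gp.card • s := by
      apply Finset.sum_le_card_nsmul
      intro v hv
      exact ((Finset.mem_filter.mp ((Finset.mem_filter.mp hv).1)).2).2
    rw [nsmul_eq_mul] at h1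
    rw [hGpsum] at hGsum
    linarith
  -- the injection
  set Tset : Set (List A) := {v : List A | v.length = n ∧ InLangS X.carrier v ∧ w <:+ v}
    with hTset
  have hTfin : Tset.Finite := (finite_listLen n).subset fun l hl => hl.1
  have hdata : ∀ v ∈ Gp, ∃ P : List A × (Fin (W+1) × (Fin W → A)),
      P.1 ∈ Tset ∧
      P.1.drop ((P.2.1 : ℕ)) ++ (List.ofFn P.2.2).take ((P.2.1 : ℕ)) = List.ofFn v := by
    intro v hv
    have hvG : v ∈ G := (Finset.mem_filter.mp hv).1
    have hvpos : 0 < mv v := (Finset.mem_filter.mp hv).2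
    obtain ⟨⟨q, hqW, hocc⟩, hvs⟩ := (Finset.mem_filter.mp hvG).2
    obtain ⟨x, hxX, hword⟩ := posmeas_word_in_lang X μ hXc hvpos
    have htrans : wordAt x ((a + q : ℕ) : ℤ) k = w := by
      rw [← hword, wordAt_drop x 0 (by omega : a + q ≤ n),
        wordAt_take x _ (by omega : k ≤ n - (a + q))] at hocc
      simpa using hocc
    have hsplitu : wordAt x 0 (a + q + k)
        = wordAt x 0 (a + q) ++ wordAt x ((a + q : ℕ) : ℤ) k := by
      have h1 := wordAt_append x 0 (a + q) k
      simpa using h1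
    have husuf : w <:+ wordAt x 0 (a + q + k) :=
      ⟨wordAt x 0 (a + q), by rw [hsplitu, htrans]⟩
    have hulen : (wordAt x 0 (a + q + k)).length ≤ n := by rw [length_wordAt]; omega
    obtain ⟨V, hVlen, hVlang, hVsuf⟩ :=
      exists_ext X (wordAt_mem_lang X hxX 0 (a + q + k)) hulen
    set tl : List A := wordAt x ((a + q + k : ℕ) : ℤ) (W - q) with htl
    have htllen : tl.length = W - q := length_wordAt _ _ _
    set pad : Fin W → A := fun t =>
      if ht : (t : ℕ) < tl.length then tl.get ⟨t, ht⟩ else Classical.arbitrary A with hpad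
    refine ⟨(V, (⟨W - q, by omega⟩, pad)), ⟨hVlen, hVlang, husuf.trans hVsuf⟩, ?_⟩
    show V.drop (W - q) ++ (List.ofFn pad).take (W - q) = List.ofFn v
    have c1 : V.drop (W - q) = wordAt x 0 (a + q + k) := by
      have h1 := isSuffix_eq_drop hVsuf
      rw [hVlen, length_wordAt] at h1
      rwa [show n - (a + q + k) = W - q by omega] at h1
    have c2 : (List.ofFn pad).take (W - q) = tl := by
      apply List.ext_getElem
      · rw [List.length_take, List.length_ofFn, htllen]; omega
      · intro t h1 h2
        simp only [List.getElem_take, List.getElem_ofFn, hpad, Fin.val_mk]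
        rw [dif_pos h2]
        simp [List.get_eq_getElem]
    rw [c1, c2, ← hword]
    rw [show n = (a + q + k) + (W - q) by omega, wordAt_append]
    simp only [zero_add, htl]
    rw [← hsplitu, wordAt_append x 0 (a + q + k) (W - q)]
    simp only [zero_add]
  choose Φ hΦ1 hΦ2 using hdata
  have hGpcard : (Gp.card : ℝ) ≤ ((Tset.ncard : ℕ) : ℝ)
      * (Fintype.card (Fin (W+1) × (Fin W → A)) : ℝ) := by
    set junk : List A × (Fin (W+1) × (Fin W → A)) :=
      (([] : List A), (⟨0, Nat.succ_pos W⟩, fun _ => Classical.arbitrary A)) with hjunk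
    set f : (Fin n → A) → List A × (Fin (W+1) × (Fin W → A)) :=
      fun v => if hv : v ∈ Gp then Φ v hv else junk with hf
    have hcard : Gp.card ≤ (hTfin.toFinset ×ˢ (Finset.univ : Finset (Fin (W+1) × (Fin W → A)))).card := by
      apply Finset.card_le_card_of_injOn f
      · intro v hv
        rw [Finset.mem_coe] at hv
        rw [Finset.mem_coe, Finset.mem_product]
        constructor
        · rw [hf]
          simp only [dif_pos hv]
          exact hTfin.mem_toFinset.mpr (hΦ1 v hv)
        · exact Finset.mem_univ _
      · intro v1 h1 v2 h2 heq
        rw [Finset.mem_coe] at h1 h2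
        have e1 := hΦ2 v1 h1
        have e2 := hΦ2 v2 h2
        rw [hf] at heq
        simp only [dif_pos h1, dif_pos h2] at heq
        rw [heq] at e1
        exact List.ofFn_injective (e1.symm.trans e2)
    rw [Finset.card_product, Finset.card_univ] at hcard
    rw [Set.ncard_eq_toFinset_card _ hTfin]
    exact_mod_cast hcard
  -- conclude
  calc 2*β ≤ (Gp.card : ℝ) * s := hGpcard_s
    _ ≤ ((Tset.ncard : ℕ) : ℝ) * (Fintype.card (Fin (W+1) × (Fin W → A)) : ℝ) * s := by
        apply mul_le_mul_of_nonneg_right hGpcard (le_of_lt hspos)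
    _ = _ := by rw [hTset, hs, hhX]

end Aux6

/-- If `|L_n(X)| ≤ C n^r e^{n h(X)}` for all `n ≥ 1` and `μ` is an ergodic
measure of maximal entropy on `X`, then for every `w ∈ L(X)` with `μ([w]) > 0`
there is `ε > 0` such that the number of words of length `n` in `L(X)` ending
with `w` exceeds `ε · n^{-1/2} · e^{n h(X)}` for all `n ≥ |w|`. -/
theorem stmt9 {A : Type*} [Fintype A] [DecidableEq A]
    [TopologicalSpace A] [DiscreteTopology A]
    [MeasurableSpace A] [MeasurableSingletonClass A]
    (X : Subshift A) (C r : ℝ) (hC : 0 < C) (hr : 0 < r)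
    (hcount : ∀ n : ℕ, 1 ≤ n →
      (({w : List A | w.length = n ∧ InLangS X.carrier w}.ncard : ℝ)) ≤
        C * (n : ℝ) ^ r * Real.exp ((n : ℝ) * langEntropy X.carrier))
    (μ : MeasureTheory.Measure (ℤ → A)) (hprob : MeasureTheory.IsProbabilityMeasure μ)
    (herg : Ergodic shiftMap μ)
    (hsupp : μ X.carrier = 1)
    (hmme : measEntropy μ = langEntropy X.carrier)
    (w : List A) (hw : InLangS X.carrier w) (hpos : 0 < μ (cylList w)) :
    ∃ ε : ℝ, 0 < ε ∧ ∀ n : ℕ, w.length ≤ n →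
      ε * (n : ℝ) ^ (-(1 : ℝ) / 2) * Real.exp ((n : ℝ) * langEntropy X.carrier) <
        ({v : List A | v.length = n ∧ InLangS X.carrier v ∧ w <:+ v}.ncard : ℝ) := by
  
  classical
  haveI := hprob
  obtain ⟨x₀, hx₀⟩ : X.carrier.Nonempty := by
    apply nonempty_of_measure_ne_zero (μ := μ)
    rw [hsupp]; exact one_ne_zero
  haveI : Nonempty A := ⟨x₀ 0⟩
  have hXmeas : MeasurableSet X.carrier := measurableSet_carrier' X
  have hXc : μ X.carrierᶜ = 0 := by
    have h1 := measure_compl hXmeas (measure_ne_top μ X.carrier)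
    rw [hsupp, measure_univ] at h1
    simpa using h1
  have hLfin : ∀ n : ℕ, {v : List A | v.length = n ∧ InLangS X.carrier v}.Finite :=
    fun n => (finite_listLen n).subset fun l hl => hl.1
  have hlang1 : ∀ n : ℕ,
      (1:ℝ) ≤ (({v : List A | v.length = n ∧ InLangS X.carrier v}.ncard : ℕ) : ℝ) := by
    intro n
    have hne : {v : List A | v.length = n ∧ InLangS X.carrier v}.Nonempty :=
      ⟨wordAt x₀ 0 n, length_wordAt x₀ 0 n, wordAt_mem_lang X hx₀ 0 n⟩
    have h1 := (Set.ncard_pos (hLfin n)).mpr hne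
    exact_mod_cast h1
  have hHn : ∀ n : ℕ, 1 ≤ n → (n:ℝ) * langEntropy X.carrier ≤ partEntropy μ n := by
    intro n hn
    rw [← hmme]
    exact measEntropy_le_partEntropy μ n hn
  have hTfin : ∀ n : ℕ, {v : List A | v.length = n ∧ InLangS X.carrier v ∧ w <:+ v}.Finite :=
    fun n => (finite_listLen n).subset fun l hl => hl.1
  have hT1 : ∀ n : ℕ, w.length ≤ n →
      (1:ℝ) ≤ (({v : List A | v.length = n ∧ InLangS X.carrier v ∧ w <:+ v}.ncard : ℕ) : ℝ) := by
    intro n hn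
    obtain ⟨v, h1, h2, h3⟩ := exists_ext X hw hn
    have hne : {v : List A | v.length = n ∧ InLangS X.carrier v ∧ w <:+ v}.Nonempty :=
      ⟨v, h1, h2, h3⟩
    have h4 := (Set.ncard_pos (hTfin n)).mpr hne
    exact_mod_cast h4
  have hβpos : (0:ℝ) < 1/(12*r+6) := by positivity
  obtain ⟨W, hW1, hWμ⟩ := exists_window μ herg w hpos hβpos
  have hKpos : (0:ℝ) < (Fintype.card (Fin (W+1) × (Fin W → A)) : ℝ) := by
    exact_mod_cast Fintype.card_pos
  set n₁ : ℕ := ⌈Real.exp (4*|Real.log C| + 9)⌉₊ with hn₁def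
  set n₂ : ℕ := max (max n₁ (W + w.length + 1)) 1 with hn₂def
  have main : ∀ n : ℕ, n₂ ≤ n →
      ((1/(12*r+6))/(Fintype.card (Fin (W+1) × (Fin W → A)) : ℝ)) *
          ((n:ℝ) ^ (-(1:ℝ)/2) * Real.exp ((n:ℝ) * langEntropy X.carrier)) <
        (({v : List A | v.length = n ∧ InLangS X.carrier v ∧ w <:+ v}.ncard : ℕ) : ℝ) := by
    intro n hn
    have hn1 : 1 ≤ n := le_trans (le_max_right _ 1) hn
    have hnW : W + w.length + 1 ≤ n :=
      le_trans (le_trans (le_max_right n₁ _) (le_max_left _ 1)) hn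
    have hn₁n : n₁ ≤ n := le_trans (le_trans (le_max_left n₁ _) (le_max_left _ 1)) hn
    have hn0 : (0:ℝ) < n := by exact_mod_cast hn1
    have hlogn : 4*|Real.log C| + 9 ≤ Real.log n := by
      rw [Real.le_log_iff_exp_le hn0]
      calc Real.exp (4*|Real.log C| + 9) ≤ (n₁:ℝ) := Nat.le_ceil _
        _ ≤ n := by exact_mod_cast hn₁n
    have hest := main_est X C r hC hr μ herg.toMeasurePreserving hXc w W hW1 hWμ n hn1 hnW
      (hcount n hn1) (hlang1 n) (hHn n hn1) hlogn
    have hupos : (0:ℝ) < (n:ℝ) ^ (-(1:ℝ)/2) * Real.exp ((n:ℝ) * langEntropy X.carrier) := by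
      positivity
    have hTn0 : (0:ℝ) ≤
        (({v : List A | v.length = n ∧ InLangS X.carrier v ∧ w <:+ v}.ncard : ℕ) : ℝ) := by
      positivity
    have hsu : ((n:ℝ) ^ ((1:ℝ)/2) * Real.exp (-((n:ℝ) * langEntropy X.carrier))) *
        ((n:ℝ) ^ (-(1:ℝ)/2) * Real.exp ((n:ℝ) * langEntropy X.carrier)) = 1 := by
      rw [show ((n:ℝ) ^ ((1:ℝ)/2) * Real.exp (-((n:ℝ) * langEntropy X.carrier))) *
          ((n:ℝ) ^ (-(1:ℝ)/2) * Real.exp ((n:ℝ) * langEntropy X.carrier))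
          = ((n:ℝ) ^ ((1:ℝ)/2) * (n:ℝ) ^ (-(1:ℝ)/2)) *
            (Real.exp (-((n:ℝ) * langEntropy X.carrier)) *
              Real.exp ((n:ℝ) * langEntropy X.carrier)) from by ring]
      rw [← Real.rpow_add hn0, ← Real.exp_add]
      norm_num
    have h2 : 2*(1/(12*r+6)) *
        ((n:ℝ) ^ (-(1:ℝ)/2) * Real.exp ((n:ℝ) * langEntropy X.carrier)) ≤
        (({v : List A | v.length = n ∧ InLangS X.carrier v ∧ w <:+ v}.ncard : ℕ) : ℝ) *
          (Fintype.card (Fin (W+1) × (Fin W → A)) : ℝ) := by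
      have h3 := mul_le_mul_of_nonneg_right hest (le_of_lt hupos)
      calc 2*(1/(12*r+6)) * ((n:ℝ) ^ (-(1:ℝ)/2) * Real.exp ((n:ℝ) * langEntropy X.carrier))
          ≤ ((({v : List A | v.length = n ∧ InLangS X.carrier v ∧ w <:+ v}.ncard : ℕ) : ℝ) *
              (Fintype.card (Fin (W+1) × (Fin W → A)) : ℝ) *
              ((n:ℝ) ^ ((1:ℝ)/2) * Real.exp (-((n:ℝ) * langEntropy X.carrier)))) *
              ((n:ℝ) ^ (-(1:ℝ)/2) * Real.exp ((n:ℝ) * langEntropy X.carrier)) := h3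
        _ = (({v : List A | v.length = n ∧ InLangS X.carrier v ∧ w <:+ v}.ncard : ℕ) : ℝ) *
              (Fintype.card (Fin (W+1) × (Fin W → A)) : ℝ) *
              (((n:ℝ) ^ ((1:ℝ)/2) * Real.exp (-((n:ℝ) * langEntropy X.carrier))) *
                ((n:ℝ) ^ (-(1:ℝ)/2) * Real.exp ((n:ℝ) * langEntropy X.carrier))) := by ring
        _ = _ := by rw [hsu, mul_one]
    -- conclude
    rw [div_mul_eq_mul_div, div_lt_iff₀ hKpos]
    nlinarith [hupos, hβpos, h2]
  have hn₂1 : 1 ≤ n₂ := le_max_right _ _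
  have hEne : ((Finset.Icc 1 n₂).image
      (fun j : ℕ => Real.exp (-((j:ℝ) * langEntropy X.carrier)) * (j:ℝ) ^ ((1:ℝ)/2) / 2)).Nonempty :=
    ⟨_, Finset.mem_image.mpr ⟨1, Finset.mem_Icc.mpr ⟨le_refl 1, hn₂1⟩, rfl⟩⟩
  set εs : ℝ := ((Finset.Icc 1 n₂).image
      (fun j : ℕ => Real.exp (-((j:ℝ) * langEntropy X.carrier)) * (j:ℝ) ^ ((1:ℝ)/2) / 2)).min'
      hEne with hεs
  have hεspos : 0 < εs := by
    obtain ⟨j, hj, hje⟩ := Finset.mem_image.mp (Finset.min'_mem _ hEne)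
    have hj1 : 1 ≤ j := (Finset.mem_Icc.mp hj).1
    have hj0 : (0:ℝ) < j := by exact_mod_cast hj1
    rw [hεs, ← hje]
    positivity
  refine ⟨min ((1/(12*r+6))/(Fintype.card (Fin (W+1) × (Fin W → A)) : ℝ)) εs,
    lt_min (by positivity) hεspos, ?_⟩
  intro n hkn
  rcases Nat.eq_zero_or_pos n with rfl | hn1
  · have hz : ((0:ℕ):ℝ) ^ (-(1:ℝ)/2) = 0 := by
      rw [Nat.cast_zero, Real.zero_rpow (by norm_num : (-(1:ℝ))/2 ≠ 0)]
    rw [hz]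
    have hT := hT1 0 hkn
    calc _ * 0 * Real.exp (((0:ℕ):ℝ) * langEntropy X.carrier) = 0 := by ring
      _ < 1 := one_pos
      _ ≤ _ := hT
  · have hn0 : (0:ℝ) < n := by exact_mod_cast hn1
    have hupos : (0:ℝ) < (n:ℝ) ^ (-(1:ℝ)/2) * Real.exp ((n:ℝ) * langEntropy X.carrier) := by
      positivity
    rcases lt_or_ge n n₂ with hlt | hge
    · have hεsle : εs ≤ Real.exp (-((n:ℝ) * langEntropy X.carrier)) * (n:ℝ) ^ ((1:ℝ)/2) / 2 :=
        Finset.min'_le _ _ (Finset.mem_image.mpr ⟨n, Finset.mem_Icc.mpr ⟨hn1, le_of_lt hlt⟩, rfl⟩)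
      have hcsu : (Real.exp (-((n:ℝ) * langEntropy X.carrier)) * (n:ℝ) ^ ((1:ℝ)/2) / 2) *
          ((n:ℝ) ^ (-(1:ℝ)/2) * Real.exp ((n:ℝ) * langEntropy X.carrier)) = 1/2 := by
        rw [show (Real.exp (-((n:ℝ) * langEntropy X.carrier)) * (n:ℝ) ^ ((1:ℝ)/2) / 2) *
            ((n:ℝ) ^ (-(1:ℝ)/2) * Real.exp ((n:ℝ) * langEntropy X.carrier))
            = ((n:ℝ) ^ ((1:ℝ)/2) * (n:ℝ) ^ (-(1:ℝ)/2)) *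
              (Real.exp (-((n:ℝ) * langEntropy X.carrier)) *
                Real.exp ((n:ℝ) * langEntropy X.carrier)) / 2 from by ring]
        rw [← Real.rpow_add hn0, ← Real.exp_add]
        norm_num
      have hT := hT1 n hkn
      have hmin : min ((1/(12*r+6))/(Fintype.card (Fin (W+1) × (Fin W → A)) : ℝ)) εs ≤ εs :=
        min_le_right _ _
      calc min ((1/(12*r+6))/(Fintype.card (Fin (W+1) × (Fin W → A)) : ℝ)) εs *
            (n:ℝ) ^ (-(1:ℝ)/2) * Real.exp ((n:ℝ) * langEntropy X.carrier)
          = min ((1/(12*r+6))/(Fintype.card (Fin (W+1) × (Fin W → A)) : ℝ)) εs *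
            ((n:ℝ) ^ (-(1:ℝ)/2) * Real.exp ((n:ℝ) * langEntropy X.carrier)) := by ring
        _ ≤ εs * ((n:ℝ) ^ (-(1:ℝ)/2) * Real.exp ((n:ℝ) * langEntropy X.carrier)) :=
            mul_le_mul_of_nonneg_right hmin (le_of_lt hupos)
        _ ≤ (Real.exp (-((n:ℝ) * langEntropy X.carrier)) * (n:ℝ) ^ ((1:ℝ)/2) / 2) *
            ((n:ℝ) ^ (-(1:ℝ)/2) * Real.exp ((n:ℝ) * langEntropy X.carrier)) :=
            mul_le_mul_of_nonneg_right hεsle (le_of_lt hupos)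
        _ = 1/2 := hcsu
        _ < 1 := by norm_num
        _ ≤ _ := hT
    · have hmain := main n hge
      have hmin : min ((1/(12*r+6))/(Fintype.card (Fin (W+1) × (Fin W → A)) : ℝ)) εs ≤
          (1/(12*r+6))/(Fintype.card (Fin (W+1) × (Fin W → A)) : ℝ) := min_le_left _ _
      calc min ((1/(12*r+6))/(Fintype.card (Fin (W+1) × (Fin W → A)) : ℝ)) εs *
            (n:ℝ) ^ (-(1:ℝ)/2) * Real.exp ((n:ℝ) * langEntropy X.carrier)
          = min ((1/(12*r+6))/(Fintype.card (Fin (W+1) × (Fin W → A)) : ℝ)) εs *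
            ((n:ℝ) ^ (-(1:ℝ)/2) * Real.exp ((n:ℝ) * langEntropy X.carrier)) := by ring
        _ ≤ ((1/(12*r+6))/(Fintype.card (Fin (W+1) × (Fin W → A)) : ℝ)) *
            ((n:ℝ) ^ (-(1:ℝ)/2) * Real.exp ((n:ℝ) * langEntropy X.carrier)) :=
            mul_le_mul_of_nonneg_right hmin (le_of_lt hupos)
        _ < _ := hmain
end

section
/- If a subshift X has left almost specification with constant mistake function g ≡ m, then every word u ∈ L(X̂) in the language of the measure center X̂ of X occurs at least m+1 times disjointly in some point of X; more precisely, for every u ∈ L(X̂) there is a word w ∈ L(X) containing at least m+1 disjoint occurrences of u. -/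
open Real Filter MeasureTheory

lemma shift_iter {A : Type*} (x : ℤ → A) (N : ℕ) :
    shiftMap^[N] x = fun j => x (j + N) := by
  induction N generalizing x with
  | zero => simp
  | succ N ih =>
    rw [Function.iterate_succ_apply, ih (shiftMap x)]
    funext j
    simp [shiftMap]
    ring_nf

lemma wordAt_shift {A : Type*} (x : ℤ → A) (N n : ℕ) :
    wordAt (shiftMap^[N] x) 0 n = wordAt x (N : ℤ) n := by
  rw [shift_iter]
  unfold wordAt
  congr 1
  funext k
  congr 1
  push_cast
  ring

lemma wordAt_length {A : Type*} (x : ℤ → A) (i : ℤ) (n : ℕ) :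
    (wordAt x i n).length = n := by simp [wordAt]

lemma drop_take_wordAt {A : Type*} (x : ℤ → A) (a b L : ℕ) (h : a + b ≤ L) :
    ((wordAt x 0 L).drop a).take b = wordAt x (a : ℤ) b := by
  apply List.ext_getElem
  · simp [wordAt]; omega
  · intro k h1 h2
    have hk : k < b := by simpa [wordAt] using h2
    have : a + k < L := by omega
    simp only [List.getElem_take, List.getElem_drop, wordAt, List.getElem_ofFn]
    congr 1
    push_cast
    ring

lemma cylList_measurable {A : Type*} [MeasurableSpace A] [MeasurableSingletonClass A]
    (u : List A) : MeasurableSet (cylList u) := by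
  have : cylList u = ⋂ k : Fin u.length, (fun x : ℤ → A => x ((k : ℕ) : ℤ)) ⁻¹' {u.get k} := by
    ext x
    simp only [cylList, wordAt, Set.mem_setOf_eq, Set.mem_iInter, Set.mem_preimage,
      Set.mem_singleton_iff, List.ext_get_iff, List.length_ofFn, List.get_ofFn]
    constructor
    · rintro ⟨-, h⟩ k
      simpa using h k k.isLt (by simp [k.isLt])
    · intro h
      refine ⟨trivial, fun n h1 h2 => ?_⟩
      simpa using h ⟨n, h2⟩
  rw [this]
  exact MeasurableSet.iInter fun k =>
    (measurable_pi_apply _) (measurableSet_singleton _)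

/-- If `X` has LAS with constant mistake function `g ≡ m`, then every word `u` in
the language of the measure center (equivalently: every `u` with `μ([u]) > 0` for
some shift-invariant probability measure `μ` supported on `X`) occurs at least
`m+1` times disjointly in a single word of `L(X)`. -/
theorem stmt10 {A : Type*} [Fintype A] [DecidableEq A]
    [TopologicalSpace A] [DiscreteTopology A]
    [MeasurableSpace A] [MeasurableSingletonClass A]
    (X : Subshift A) (m : ℕ)
    (hLAS : ∀ w1 w2 : List A, InLangS X.carrier w1 → InLangS X.carrier w2 →
      ∃ b : List A, b.length = w1.length ∧ InLangS X.carrier b ∧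
        listHamming b w1 ≤ m ∧ InLangS X.carrier (b ++ w2)) :
    ∀ u : List A,
      (∃ μ : MeasureTheory.Measure (ℤ → A), MeasureTheory.IsProbabilityMeasure μ ∧
        MeasureTheory.MeasurePreserving shiftMap μ μ ∧ μ X.carrier = 1 ∧
        0 < μ (cylList u)) →
      ∃ w : List A, InLangS X.carrier w ∧
        ∃ p : Fin (m + 1) → ℕ,
          (∀ i j : Fin (m + 1), i < j → p i + u.length ≤ p j) ∧
          (∀ i : Fin (m + 1), p i + u.length ≤ w.length ∧
            ((w.drop (p i)).take u.length = u)) := by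
  rintro u ⟨μ, hprob, hmp, hX1, hupos⟩
  -- X.carrier is measurable
  have hXmeas : MeasurableSet X.carrier := X.isClosed.measurableSet
  have hXc : μ X.carrierᶜ = 0 := by
    rw [measure_compl hXmeas (measure_ne_top μ _), hX1, measure_univ]; simp
  rcases eq_or_ne u [] with rfl | hu
  · -- trivial case: u = []
    obtain ⟨x, hx⟩ := nonempty_of_measure_ne_zero (by rw [hX1]; exact one_ne_zero)
    refine ⟨[], ⟨x, hx, 0, by simp [wordAt]⟩, fun _ => 0, ?_, ?_⟩
    · intro i j _; simp
    · intro i; simp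
  · set n := u.length with hn
    have hnpos : 0 < n := List.length_pos_iff.2 hu
    -- the set s = [u] ∩ X has positive measure
    set s : Set (ℤ → A) := cylList u ∩ X.carrier with hs
    have hsmeas : MeasurableSet s := (cylList_measurable u).inter hXmeas
    have hspos : μ s ≠ 0 := by
      intro h0
      have : μ (cylList u) ≤ μ s + μ X.carrierᶜ := by
        refine le_trans (measure_mono ?_) (measure_union_le _ _)
        intro x hx
        by_cases hxX : x ∈ X.carrier
        · exact Or.inl ⟨hx, hxX⟩
        · exact Or.inr hxX
      rw [h0, hXc, add_zero] at this
      exact absurd (le_antisymm this (zero_le)) (ne_of_gt hupos)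
    -- Poincaré recurrence
    have hcons : MeasureTheory.Conservative shiftMap μ := hmp.conservative
    have hae : ∀ᵐ x ∂μ, x ∈ s → ∃ᶠ N in atTop, shiftMap^[N] x ∈ s :=
      hcons.ae_mem_imp_frequently_image_mem hsmeas.nullMeasurableSet
    obtain ⟨x, hxs, hxrec⟩ :=
      MeasureTheory.Measure.exists_mem_of_measure_ne_zero_of_ae hspos (ae_restrict_of_ae hae)
    have hfreq := hxrec hxs
    rw [frequently_atTop] at hfreq
    -- occurrences
    have key : ∀ M : ℕ, ∃ N, M ≤ N ∧ wordAt x (N : ℤ) n = u := by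
      intro M
      obtain ⟨N, hN1, hN2⟩ := hfreq M
      exact ⟨N, hN1, by rw [← wordAt_shift]; exact hN2.1⟩
    choose f hf1 hf2 using key
    set q : ℕ → ℕ := fun k => Nat.rec 0 (fun _ prev => f (prev + n)) k with hq
    have hq0 : q 0 = 0 := rfl
    have hqsucc : ∀ k, q (k + 1) = f (q k + n) := fun k => rfl
    have hqstep : ∀ k, q k + n ≤ q (k + 1) := by
      intro k; rw [hqsucc]; exact hf1 _
    have hqocc : ∀ k, wordAt x ((q k : ℕ) : ℤ) n = u := by
      intro k
      cases k with
      | zero => exact hxs.1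
      | succ k => rw [hqsucc]; exact hf2 _
    have hqmono : ∀ i j : ℕ, i < j → q i + n ≤ q j := by
      intro i j hij
      induction j with
      | zero => omega
      | succ j ih =>
        rcases Nat.lt_succ_iff_lt_or_eq.1 hij with h | h
        · exact le_trans (ih h) (le_trans (Nat.le_add_right _ _) (hqstep j))
        · subst h; exact hqstep i
    have hqle : ∀ i j : ℕ, i ≤ j → q i ≤ q j := by
      intro i j hij
      rcases lt_or_eq_of_le hij with h | h
      · exact le_trans (Nat.le_add_right _ _) (hqmono i j h)
      · subst h; exact le_rfl
    set L : ℕ := q m + n with hL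
    refine ⟨wordAt x 0 L, ⟨x, hxs.2, 0, by rw [wordAt_length]⟩, fun i => q i, ?_, ?_⟩
    · intro i j hij; exact hqmono i j hij
    · intro i
      have hiL : q (i : ℕ) + n ≤ L := by
        have := hqle i m (Nat.lt_succ_iff.1 i.isLt)
        omega
      refine ⟨by rw [wordAt_length]; exact hiL, ?_⟩
      rw [drop_take_wordAt x _ _ _ hiL]
      exact hqocc i
end

section
/- If an irreducible subshift X has almost specification with constant mistake function g ≡ 1, then X has either left almost specification with g ≡ 1 or right almost specification with g ≡ 1. -/
open Real Filter MeasureTheory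

lemma wordAt_add {A : Type*} (x : ℤ → A) (i : ℤ) (m n : ℕ) :
    wordAt x i (m + n) = wordAt x i m ++ wordAt x (i + m) n := by
  unfold wordAt
  rw [List.ofFn_add]
  congr 1
  congr 1
  funext j
  congr 1
  simp only [Fin.coe_natAdd]
  push_cast
  ring

lemma inLang_prefix {A : Type*} {S : Set (ℤ → A)} {w b : List A}
    (h : InLangS S (w ++ b)) : InLangS S w := by
  obtain ⟨x, hx, i, hw⟩ := h
  rw [List.length_append, wordAt_add] at hw
  exact ⟨x, hx, i, (List.append_inj hw (by simp [wordAt])).1⟩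

lemma inLang_suffix {A : Type*} {S : Set (ℤ → A)} {a w : List A}
    (h : InLangS S (a ++ w)) : InLangS S w := by
  obtain ⟨x, hx, i, hw⟩ := h
  rw [List.length_append, wordAt_add] at hw
  exact ⟨x, hx, i + a.length, (List.append_inj hw (by simp [wordAt])).2⟩

lemma listHamming_append {A : Type*} [DecidableEq A] (a b c d : List A)
    (h : a.length = c.length) :
    listHamming (a ++ b) (c ++ d) = listHamming a c + listHamming b d := by
  unfold listHamming
  rw [List.zipWith_append h, List.sum_append]

lemma eq_of_listHamming_zero {A : Type*} [DecidableEq A] {v w : List A}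
    (h0 : listHamming v w = 0) (hl : v.length = w.length) : v = w := by
  induction v generalizing w with
  | nil =>
    cases w with
    | nil => rfl
    | cons b s => simp at hl
  | cons a t ih =>
    cases w with
    | nil => simp at hl
    | cons b s =>
      unfold listHamming at h0
      rw [List.zipWith_cons_cons, List.sum_cons] at h0
      have hl' : t.length = s.length := by simpa using hl
      by_cases hab : a = b
      · rw [if_pos hab, Nat.zero_add] at h0
        rw [hab, ih h0 hl']
      · rw [if_neg hab] at h0
        omega

/-- If an irreducible subshift has almost specification with `g ≡ 1`, then it has
either left almost specification with `g ≡ 1` or right almost specification with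
`g ≡ 1`. -/
theorem stmt12 {A : Type*} [Fintype A] [DecidableEq A]
    [TopologicalSpace A] [DiscreteTopology A]
    (X : Subshift A)
    (hirr : ∀ u v : List A, InLangS X.carrier u → InLangS X.carrier v →
      ∃ z : List A, InLangS X.carrier (u ++ z ++ v))
    (hAS : ∀ (k : ℕ) (ws : Fin k → List A), (∀ i, InLangS X.carrier (ws i)) →
      ∃ bars : Fin k → List A,
        (∀ i, (bars i).length = (ws i).length ∧ listHamming (bars i) (ws i) ≤ 1 ∧
          InLangS X.carrier (bars i)) ∧
        InLangS X.carrier (List.ofFn bars).flatten) :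
    (∀ u v : List A, InLangS X.carrier u → InLangS X.carrier v →
      ∃ u' : List A, u'.length = u.length ∧ listHamming u' u ≤ 1 ∧
        InLangS X.carrier (u' ++ v)) ∨
    (∀ u v : List A, InLangS X.carrier u → InLangS X.carrier v →
      ∃ v' : List A, v'.length = v.length ∧ listHamming v' v ≤ 1 ∧
        InLangS X.carrier (u ++ v')) := by
  by_cases hL : (∀ u v : List A, InLangS X.carrier u → InLangS X.carrier v →
      ∃ u' : List A, u'.length = u.length ∧ listHamming u' u ≤ 1 ∧
        InLangS X.carrier (u' ++ v))
  · exact Or.inl hL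
  · right
    push_neg at hL
    obtain ⟨u₁, v₁, hu₁, hv₁, hbad⟩ := hL
    intro u v hu hv
    obtain ⟨z, hz⟩ := hirr v₁ u hv₁ hu
    obtain ⟨bars, hbars, hflat⟩ := hAS 3 ![u₁, v₁ ++ z ++ u, v] (by
      intro i
      fin_cases i
      · simpa using hu₁
      · simpa [List.append_assoc] using hz
      · simpa using hv)
    have h0 := hbars 0
    have h1 := hbars 1
    have h2 := hbars 2
    simp only [Matrix.cons_val_zero, Matrix.cons_val_one, Matrix.head_cons] at h0 h1
    have h2' : (bars 2).length = v.length ∧ listHamming (bars 2) v ≤ 1 ∧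
        InLangS X.carrier (bars 2) := by
      simpa using h2
    have hflat' : InLangS X.carrier (bars 0 ++ (bars 1 ++ bars 2)) := by
      have he : (List.ofFn bars).flatten = bars 0 ++ (bars 1 ++ bars 2) := by
        simp [List.ofFn_succ]
      rwa [he] at hflat
    have hlen1 : (bars 1).length = v₁.length + z.length + u.length := by
      have := h1.1
      simp only [List.length_append] at this
      omega
    obtain ⟨p, q, r, hpqr, hpl, hql, hrl⟩ : ∃ p q r : List A,
        bars 1 = p ++ (q ++ r) ∧ p.length = v₁.length ∧ q.length = z.length ∧
        r.length = u.length := by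
      refine ⟨(bars 1).take v₁.length, ((bars 1).drop v₁.length).take z.length,
        ((bars 1).drop v₁.length).drop z.length, ?_, ?_, ?_, ?_⟩
      · rw [List.take_append_drop, List.take_append_drop]
      · rw [List.length_take]; omega
      · rw [List.length_take, List.length_drop]; omega
      · rw [List.length_drop, List.length_drop]; omega
    have hham : listHamming p v₁ + (listHamming q z + listHamming r u) ≤ 1 := by
      have hh := h1.2.1
      rw [hpqr, List.append_assoc v₁ z u, listHamming_append _ _ _ _ hpl,
        listHamming_append _ _ _ _ hql] at hh
      exact hh
    by_cases hcase : listHamming p v₁ = 0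
    · exfalso
      have hpv : p = v₁ := eq_of_listHamming_zero hcase hpl
      have hpre : InLangS X.carrier (bars 0 ++ p) := by
        apply inLang_prefix (b := q ++ (r ++ bars 2))
        have he : bars 0 ++ p ++ (q ++ (r ++ bars 2)) =
            bars 0 ++ (bars 1 ++ bars 2) := by
          rw [hpqr]; simp [List.append_assoc]
        rwa [he]
      rw [hpv] at hpre
      exact hbad (bars 0) h0.1 h0.2.1 hpre
    · have hq0 : q = z := eq_of_listHamming_zero (by omega) hql
      have hr0 : r = u := eq_of_listHamming_zero (by omega) hrl
      refine ⟨bars 2, h2'.1, h2'.2.1, ?_⟩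
      apply inLang_suffix (a := bars 0 ++ (p ++ q))
      have he : bars 0 ++ (p ++ q) ++ (u ++ bars 2) =
          bars 0 ++ (bars 1 ++ bars 2) := by
        rw [hpqr, hr0]; simp [List.append_assoc]
      rwa [he]
end

section
/- Let X be a subshift with left almost specification with constant mistake function g ≡ m, and let φ: X → Z be a factor map given by a sliding block code of radius r. Then Z = φ(X) has left almost specification with constant mistake function g ≡ 2r + m(2r+1). -/
open Real Filter MeasureTheory

/-- The factor of `X` under the sliding block code of radius `r` with block map `Φ`. -/
def factorImage {A B : Type*} [TopologicalSpace A]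
    (X : Subshift A) (r : ℕ) (Φ : (Fin (2 * r + 1) → A) → B) : Set (ℤ → B) :=
  (fun x : ℤ → A => fun i : ℤ =>
    Φ (fun k : Fin (2 * r + 1) => x (i - (r : ℤ) + (k : ℕ)))) '' X.carrier

lemma listHamming_ofFn {A : Type*} [DecidableEq A] : ∀ {n : ℕ} (f g : Fin n → A),
    listHamming (List.ofFn f) (List.ofFn g) = ∑ i, if f i = g i then 0 else 1 := by
  intro n
  induction n with
  | zero => intro f g; simp [listHamming]
  | succ n ih =>
    intro f g
    rw [List.ofFn_succ, List.ofFn_succ]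
    simp only [listHamming, List.zipWith_cons_cons, List.sum_cons, Fin.sum_univ_succ]
    have := ih (fun i => f i.succ) (fun i => g i.succ)
    simp only [listHamming] at this
    rw [this]

lemma listHamming_card {A : Type*} [DecidableEq A] {n : ℕ} (f g : Fin n → A) :
    listHamming (List.ofFn f) (List.ofFn g)
      = (Finset.univ.filter (fun i => f i ≠ g i)).card := by
  rw [listHamming_ofFn, Finset.card_filter]
  exact Finset.sum_congr rfl (fun i _ => by split_ifs <;> simp_all)

/-- If `X` has LAS with `g ≡ m` and `φ` is a factor map given by a sliding block
code of radius `r`, then `φ(X)` has LAS with `g ≡ 2r + m(2r+1)`. -/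
theorem stmt14 {A B : Type*} [Fintype A] [DecidableEq A] [Fintype B] [DecidableEq B]
    [TopologicalSpace A] [DiscreteTopology A]
    (X : Subshift A) (m r : ℕ) (Φ : (Fin (2 * r + 1) → A) → B)
    (hX : ∀ w1 w2 : List A, InLangS X.carrier w1 → InLangS X.carrier w2 →
      ∃ b : List A, b.length = w1.length ∧ InLangS X.carrier b ∧
        listHamming b w1 ≤ m ∧ InLangS X.carrier (b ++ w2)) :
    ∀ w1 w2 : List B,
      InLangS (factorImage X r Φ) w1 → InLangS (factorImage X r Φ) w2 →
      ∃ b : List B, b.length = w1.length ∧ InLangS (factorImage X r Φ) b ∧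
        listHamming b w1 ≤ 2 * r + m * (2 * r + 1) ∧
        InLangS (factorImage X r Φ) (b ++ w2) := by
  intro w1 w2 h1 h2
  obtain ⟨z1, ⟨x, hx, rfl⟩, i1, hw1⟩ := h1
  obtain ⟨z2, ⟨y, hy, rfl⟩, i2, hw2⟩ := h2
  obtain ⟨bX, hlen, hbXlang, hham, hcat⟩ :=
    hX (wordAt x (i1 - 3 * (r : ℤ)) (w1.length + 2 * r))
       (wordAt y (i2 - (r : ℤ)) (w2.length + 2 * r))
      ⟨x, hx, i1 - 3 * (r : ℤ), by simp [wordAt]⟩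
      ⟨y, hy, i2 - (r : ℤ), by simp [wordAt]⟩
  obtain ⟨z, hz, j, hcatz⟩ := hcat
  have hlen' : bX.length = w1.length + 2 * r := by simpa [wordAt] using hlen
  have hlen2 : (bX ++ wordAt y (i2 - (r : ℤ)) (w2.length + 2 * r)).length
      = w1.length + 2 * r + (w2.length + 2 * r) := by
    simp [wordAt, hlen']
  -- entries of z
  have hzall : ∀ q : ℕ, ∀ h : q < w1.length + 2 * r + (w2.length + 2 * r),
      z (j + (q : ℕ)) =
        (bX ++ wordAt y (i2 - (r : ℤ)) (w2.length + 2 * r))[q]'(hlen2 ▸ h) := by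
    intro q h
    have h2 : q < (bX ++ wordAt y (i2 - (r : ℤ)) (w2.length + 2 * r)).length := hlen2 ▸ h
    have h3 : q < (wordAt z j (bX ++ wordAt y (i2 - (r : ℤ)) (w2.length + 2 * r)).length).length := by
      simpa [wordAt] using h2
    calc z (j + (q : ℕ))
        = (wordAt z j (bX ++ wordAt y (i2 - (r : ℤ)) (w2.length + 2 * r)).length)[q]'h3 := by
          simp [wordAt]
      _ = _ := List.getElem_of_eq hcatz h3
  have hzbX : ∀ q : ℕ, ∀ h : q < w1.length + 2 * r, z (j + (q : ℕ)) = bX[q]'(hlen' ▸ h) := by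
    intro q h
    rw [hzall q (by omega)]
    exact List.getElem_append_left (hlen' ▸ h)
  have hzu2 : ∀ s : ℕ, ∀ _ : s < w2.length + 2 * r,
      z (j + ((w1.length + 2 * r + s : ℕ) : ℤ)) = y (i2 - (r : ℤ) + (s : ℕ)) := by
    intro s hs
    rw [hzall (w1.length + 2 * r + s) (by omega)]
    rw [List.getElem_append_right (by omega)]
    simp only [wordAt, List.getElem_ofFn]
    congr 1
    push_cast [hlen']
    ring_nf
    congr 1
    omega
  -- entries of w1 and w2
  have hw1e : ∀ t : ℕ, ∀ h : t < w1.length,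
      w1[t]'h = Φ (fun k : Fin (2 * r + 1) => x (i1 + (t : ℕ) - (r : ℤ) + (k : ℕ))) := by
    intro t h
    rw [List.getElem_of_eq hw1.symm h]
    simp [wordAt]
  have hw2e : ∀ s : ℕ, ∀ h : s < w2.length,
      w2[s]'h = Φ (fun k : Fin (2 * r + 1) => y (i2 + (s : ℕ) - (r : ℤ) + (k : ℕ))) := by
    intro s h
    rw [List.getElem_of_eq hw2.symm h]
    simp [wordAt]
  -- the candidate word
  refine ⟨wordAt (fun i : ℤ => Φ (fun k : Fin (2 * r + 1) => z (i - (r : ℤ) + (k : ℕ))))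
      (j + 3 * (r : ℤ)) w1.length, by simp [wordAt], ?_, ?_, ?_⟩
  · exact ⟨_, ⟨z, hz, rfl⟩, j + 3 * (r : ℤ), by simp [wordAt]⟩
  · -- Hamming bound
    have hw1' : w1 = List.ofFn (fun t : Fin w1.length =>
        Φ (fun k : Fin (2 * r + 1) => x (i1 + ((t : ℕ) : ℤ) - (r : ℤ) + ((k : ℕ) : ℤ)))) := by
      apply List.ext_getElem (by simp)
      intro t h1 h2
      rw [List.getElem_ofFn, hw1e t h1]
    have hbXeq : bX = List.ofFn (fun p : Fin (w1.length + 2 * r) => z (j + ((p : ℕ) : ℤ))) := by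
      apply List.ext_getElem (by simp [hlen'])
      intro p h1 h2
      rw [List.getElem_ofFn]
      exact (hzbX p (hlen' ▸ h1)).symm
    have hM : (Finset.univ.filter (fun p : Fin (w1.length + 2 * r) =>
        z (j + ((p : ℕ) : ℤ)) ≠ x (i1 - 3 * (r : ℤ) + ((p : ℕ) : ℤ)))).card ≤ m := by
      have h := hham
      rw [hbXeq] at h
      rw [show wordAt x (i1 - 3 * (r : ℤ)) (w1.length + 2 * r)
          = List.ofFn (fun p : Fin (w1.length + 2 * r) => x (i1 - 3 * (r : ℤ) + ((p : ℕ) : ℤ)))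
          from rfl] at h
      rwa [listHamming_card] at h
    have hM' : ((Finset.range (w1.length + 2 * r)).filter (fun p : ℕ =>
        z (j + (p : ℤ)) ≠ x (i1 - 3 * (r : ℤ) + (p : ℤ)))).card ≤ m := by
      refine le_trans (le_of_eq ?_) hM
      rw [Finset.card_filter, Finset.card_filter]
      exact (Fin.sum_univ_eq_sum_range
        (fun p : ℕ => if z (j + (p : ℤ)) ≠ x (i1 - 3 * (r : ℤ) + (p : ℤ)) then 1 else 0) _).symm
    nth_rewrite 2 [hw1']
    rw [show wordAt (fun i : ℤ => Φ (fun k : Fin (2 * r + 1) => z (i - (r : ℤ) + (k : ℕ))))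
          (j + 3 * (r : ℤ)) w1.length
        = List.ofFn (fun t : Fin w1.length =>
            Φ (fun k : Fin (2 * r + 1) => z (j + 3 * (r : ℤ) + ((t : ℕ) : ℤ) - (r : ℤ) + ((k : ℕ) : ℤ))))
        from rfl, listHamming_card]
    -- the two candidate bad sets
    have hsub : Finset.univ.filter (fun t : Fin w1.length =>
          Φ (fun k : Fin (2 * r + 1) => z (j + 3 * (r : ℤ) + ((t : ℕ) : ℤ) - (r : ℤ) + ((k : ℕ) : ℤ)))
            ≠ Φ (fun k : Fin (2 * r + 1) => x (i1 + ((t : ℕ) : ℤ) - (r : ℤ) + ((k : ℕ) : ℤ))))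
        ⊆ (Finset.univ.filter (fun t : Fin w1.length => w1.length ≤ (t : ℕ) + 2 * r))
          ∪ (Finset.range (2 * r + 1)).biUnion (fun k =>
              Finset.univ.filter (fun t : Fin w1.length => (t : ℕ) + 2 * r < w1.length ∧
                z (j + ((2 * r + (t : ℕ) + k : ℕ) : ℤ))
                  ≠ x (i1 - 3 * (r : ℤ) + ((2 * r + (t : ℕ) + k : ℕ) : ℤ)))) := by
      intro t ht
      rw [Finset.mem_filter] at ht
      rcases le_or_gt w1.length ((t : ℕ) + 2 * r) with hsp | hsp
      · exact Finset.mem_union_left _ (Finset.mem_filter.2 ⟨Finset.mem_univ _, hsp⟩)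
      · refine Finset.mem_union_right _ ?_
        by_contra hcon
        apply ht.2
        congr 1
        funext k
        have hk : ¬ (z (j + ((2 * r + (t : ℕ) + (k : ℕ) : ℕ) : ℤ))
            ≠ x (i1 - 3 * (r : ℤ) + ((2 * r + (t : ℕ) + (k : ℕ) : ℕ) : ℤ))) := by
          intro hne
          exact hcon (Finset.mem_biUnion.2 ⟨(k : ℕ), Finset.mem_range.2 k.isLt,
            Finset.mem_filter.2 ⟨Finset.mem_univ _, hsp, hne⟩⟩)
        rw [not_not] at hk
        calc z (j + 3 * (r : ℤ) + ((t : ℕ) : ℤ) - (r : ℤ) + ((k : ℕ) : ℤ))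
            = z (j + ((2 * r + (t : ℕ) + (k : ℕ) : ℕ) : ℤ)) := by congr 1; push_cast; ring
          _ = x (i1 - 3 * (r : ℤ) + ((2 * r + (t : ℕ) + (k : ℕ) : ℕ) : ℤ)) := hk
          _ = x (i1 + ((t : ℕ) : ℤ) - (r : ℤ) + ((k : ℕ) : ℤ)) := by congr 1; push_cast; ring
    have hS1card : (Finset.univ.filter (fun t : Fin w1.length => w1.length ≤ (t : ℕ) + 2 * r)).card
        ≤ 2 * r := by
      refine le_trans (Finset.card_le_card_of_injOn
        (t := Finset.range (2 * r))
        (fun t : Fin w1.length => w1.length - 1 - (t : ℕ)) ?_ ?_) (by simp)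
      · intro a ha
        rw [Finset.mem_coe, Finset.mem_filter] at ha
        have h1 := ha.2
        have h2 := a.isLt
        rw [Finset.mem_coe, Finset.mem_range]
        show w1.length - 1 - (a : ℕ) < 2 * r
        omega
      · intro a ha b hb hab
        have ha' := a.isLt
        have hb' := b.isLt
        have hab' : w1.length - 1 - (a : ℕ) = w1.length - 1 - (b : ℕ) := hab
        apply Fin.ext
        omega
    have hUcard : ((Finset.range (2 * r + 1)).biUnion (fun k =>
        Finset.univ.filter (fun t : Fin w1.length => (t : ℕ) + 2 * r < w1.length ∧
          z (j + ((2 * r + (t : ℕ) + k : ℕ) : ℤ))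
            ≠ x (i1 - 3 * (r : ℤ) + ((2 * r + (t : ℕ) + k : ℕ) : ℤ))))).card
        ≤ (2 * r + 1) * m := by
      refine le_trans Finset.card_biUnion_le ?_
      have hkb : ∀ k ∈ Finset.range (2 * r + 1),
          (Finset.univ.filter (fun t : Fin w1.length => (t : ℕ) + 2 * r < w1.length ∧
            z (j + ((2 * r + (t : ℕ) + k : ℕ) : ℤ))
              ≠ x (i1 - 3 * (r : ℤ) + ((2 * r + (t : ℕ) + k : ℕ) : ℤ)))).card ≤ m := by
        intro k hk
        rw [Finset.mem_range] at hk
        refine le_trans (Finset.card_le_card_of_injOn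
          (fun t : Fin w1.length => 2 * r + (t : ℕ) + k)
          ?_ ?_) hM'
        · intro a ha
          rw [Finset.mem_coe, Finset.mem_filter] at ha
          have hb1 := ha.2.1
          have hb2 := a.isLt
          rw [Finset.mem_coe, Finset.mem_filter, Finset.mem_range]
          refine ⟨?_, ha.2.2⟩
          show 2 * r + (a : ℕ) + k < w1.length + 2 * r
          omega
        · intro a _ b _ hab
          have hab' : 2 * r + (a : ℕ) + k = 2 * r + (b : ℕ) + k := hab
          apply Fin.ext
          omega
      calc ∑ k ∈ Finset.range (2 * r + 1), (Finset.univ.filter (fun t : Fin w1.length =>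
            (t : ℕ) + 2 * r < w1.length ∧
            z (j + ((2 * r + (t : ℕ) + k : ℕ) : ℤ))
              ≠ x (i1 - 3 * (r : ℤ) + ((2 * r + (t : ℕ) + k : ℕ) : ℤ)))).card
          ≤ ∑ _k ∈ Finset.range (2 * r + 1), m := Finset.sum_le_sum hkb
        _ = (2 * r + 1) * m := by simp [Finset.sum_const, Finset.card_range, mul_comm]
    calc (Finset.univ.filter (fun t : Fin w1.length =>
          Φ (fun k : Fin (2 * r + 1) => z (j + 3 * (r : ℤ) + ((t : ℕ) : ℤ) - (r : ℤ) + ((k : ℕ) : ℤ)))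
            ≠ Φ (fun k : Fin (2 * r + 1) => x (i1 + ((t : ℕ) : ℤ) - (r : ℤ) + ((k : ℕ) : ℤ))))).card
        ≤ _ := Finset.card_le_card hsub
      _ ≤ _ := Finset.card_union_le _ _
      _ ≤ 2 * r + (2 * r + 1) * m := Nat.add_le_add hS1card hUcard
      _ = 2 * r + m * (2 * r + 1) := by ring
  · -- concatenation
    refine ⟨_, ⟨z, hz, rfl⟩, j + 3 * (r : ℤ), ?_⟩
    apply List.ext_getElem (by simp [wordAt])
    intro q hq1 hq2
    have hq : q < w1.length + w2.length := by simpa [wordAt] using hq1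
    simp only [wordAt, List.getElem_ofFn]
    by_cases hcase : q < w1.length
    · rw [List.getElem_append_left (by simpa [wordAt] using hcase)]
      simp [wordAt]
    · have hs : q - w1.length < w2.length := by clear hq1 hq2; omega
      have key : w2[q - w1.length]'hs
          = Φ (fun k : Fin (2 * r + 1) => z (j + 3 * (r : ℤ) + (q : ℕ) - (r : ℤ) + (k : ℕ))) := by
        rw [hw2e (q - w1.length) hs]
        congr 1
        funext k
        have h2 := hzu2 (q - w1.length + (k : ℕ)) (by clear hq1 hq2; omega)
        have e1 : i2 + ((q - w1.length : ℕ) : ℤ) - (r : ℤ) + ((k : ℕ) : ℤ)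
            = i2 - (r : ℤ) + ((q - w1.length + (k : ℕ) : ℕ) : ℤ) := by clear hq1 hq2; omega
        have e2 : j + ((w1.length + 2 * r + (q - w1.length + (k : ℕ)) : ℕ) : ℤ)
            = j + 3 * (r : ℤ) + (q : ℕ) - (r : ℤ) + ((k : ℕ) : ℤ) := by clear hq1 hq2; omega
        rw [e1, ← h2, e2]
      rw [List.getElem_append_right (by simpa [wordAt] using hcase)]
      simpa [wordAt] using key.symm
end
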